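/- Let H : ℝ → ℝ be nondecreasing with 0 ≤ H ≤ 1 and H(y) = 0 for y < 0, let c > 0, and suppose a* ∈ ℝ satisfies H(x) < 1/2 for all x < a* and H(x) > 1/2 for all x > a*. For a ∈ ℝ define V_a : ℝ → ℝ by V_a(x) = (2/c)·∫_x^a H(y) dy − (a − x)/c for x ≤ a and V_a(x) = 0 for x > a. Then for every x ∈ ℝ and every a ∈ ℝ, V_{a*}(x) ≤ V_a(x); that is, a ↦ V_a(x) attains its minimum at a = a*. -/

import Mathlib

open MeasureTheory intervalIntegral

/-- The candidate value function: `V_a(x) = (2/c)·∫_x^a H(y) dy − (a − x)/c` for `x ≤ a`,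
and `V_a(x) = 0` for `x > a`. -/
noncomputable def valueFun (H : ℝ → ℝ) (c a x : ℝ) : ℝ :=
  if x ≤ a then (2 / c) * (∫ y in x..a, H y) - (a - x) / c else 0

private lemma const_int (u v : ℝ) (huv : u ≤ v) :
    ∫ _y in Set.Ioc u v, (1 / 2 : ℝ) = (v - u) / 2 := by
  simp [Real.volume_Ioc, ENNReal.toReal_ofReal (by linarith : (0:ℝ) ≤ v - u)]
  rw [max_eq_left (by linarith : (0:ℝ) ≤ v - u)]; ring

private lemma int_ge (H : ℝ → ℝ) (hmono : Monotone H) (astar : ℝ)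
    (hgt : ∀ x : ℝ, astar < x → 1 / 2 < H x) {u v : ℝ}
    (hu : astar ≤ u) (huv : u ≤ v) : (v - u) / 2 ≤ ∫ y in u..v, H y := by
  rw [intervalIntegral.integral_of_le huv, ← const_int u v huv]
  apply MeasureTheory.setIntegral_mono_on
  · exact integrableOn_const (by simp [Real.volume_Ioc])
  · exact (intervalIntegrable_iff_integrableOn_Ioc_of_le huv).mp
      (hmono.intervalIntegrable : IntervalIntegrable H volume u v)
  · exact measurableSet_Ioc
  · intro y hy
    exact le_of_lt (hgt y (lt_of_le_of_lt hu hy.1))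

private lemma int_le (H : ℝ → ℝ) (hmono : Monotone H) (astar : ℝ)
    (hlt : ∀ x : ℝ, x < astar → H x < 1 / 2) {u v : ℝ}
    (hv : v ≤ astar) (huv : u ≤ v) : (∫ y in u..v, H y) ≤ (v - u) / 2 := by
  rw [intervalIntegral.integral_of_le huv, ← const_int u v huv,
    MeasureTheory.integral_Ioc_eq_integral_Ioo,
    MeasureTheory.integral_Ioc_eq_integral_Ioo]
  apply MeasureTheory.setIntegral_mono_on
  · exact (((intervalIntegrable_iff_integrableOn_Ioc_of_le huv).mp
      (hmono.intervalIntegrable : IntervalIntegrable H volume u v)).mono_set Set.Ioo_subset_Ioc_self)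
  · exact integrableOn_const (by simp [Real.volume_Ioo])
  · exact measurableSet_Ioo
  · intro y hy
    exact le_of_lt (hlt y (lt_of_lt_of_le hy.2 hv))

/-- Let `H : ℝ → ℝ` be nondecreasing with `0 ≤ H ≤ 1`, vanishing on `(−∞,0)`, `c > 0`, and
suppose `a*` satisfies `H < 1/2` on `(−∞, a*)` and `H > 1/2` on `(a*, ∞)`. Then for every
`x` and every `a`, `V_{a*}(x) ≤ V_a(x)`: the map `a ↦ V_a(x)` is minimised at `a = a*`. -/
theorem valueFun_min_at_median (H : ℝ → ℝ) (hmono : Monotone H)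
    (h0 : ∀ y, 0 ≤ H y) (h1 : ∀ y, H y ≤ 1) (hneg : ∀ y : ℝ, y < 0 → H y = 0)
    (c : ℝ) (hc : 0 < c) (astar : ℝ)
    (hlt : ∀ x : ℝ, x < astar → H x < 1 / 2) (hgt : ∀ x : ℝ, astar < x → 1 / 2 < H x) :
    ∀ x a : ℝ, valueFun H c astar x ≤ valueFun H c a x := by
  intro x a
  unfold valueFun
  have hcpos : (0:ℝ) < 2 / c := by positivity
  have he : ∀ s t I : ℝ, (2 / c) * I - (t - s) / c = (2 / c) * (I - (t - s) / 2) := by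
    intro s t I; field_simp
  rcases le_or_gt x a with hxa | hxa
  · rw [if_pos hxa]
    rcases le_or_gt x astar with hxs | hxs
    · rw [if_pos hxs]
      rcases le_or_gt astar a with hsa | hsa
      · -- split the integral
        have hsplit : (∫ y in x..astar, H y) + (∫ y in astar..a, H y) = ∫ y in x..a, H y :=
          intervalIntegral.integral_add_adjacent_intervals
            (hmono.intervalIntegrable : IntervalIntegrable H volume x astar) (hmono.intervalIntegrable : IntervalIntegrable H volume astar a)
        have h2 := int_ge H hmono astar hgt (le_refl astar) hsa
        rw [he, he]
        exact mul_le_mul_of_nonneg_left (by linarith) hcpos.le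
      · -- a < astar, x ≤ a
        have hsplit : (∫ y in x..a, H y) + (∫ y in a..astar, H y) = ∫ y in x..astar, H y :=
          intervalIntegral.integral_add_adjacent_intervals
            (hmono.intervalIntegrable : IntervalIntegrable H volume x a) (hmono.intervalIntegrable : IntervalIntegrable H volume a astar)
        have h2 := int_le H hmono astar hlt (le_refl astar) hsa.le
        rw [he, he]
        exact mul_le_mul_of_nonneg_left (by linarith) hcpos.le
    · -- astar < x, so V_astar x = 0
      rw [if_neg (not_le.mpr hxs)]
      have h2 := int_ge H hmono astar hgt hxs.le hxa
      rw [he]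
      exact mul_nonneg hcpos.le (by linarith)
  · rw [if_neg (not_le.mpr hxa)]
    rcases le_or_gt x astar with hxs | hxs
    · rw [if_pos hxs]
      have h2 := int_le H hmono astar hlt (le_refl astar) hxs
      rw [he]
      have : (0:ℝ) ≤ (2 / c) * ((astar - x) / 2 - ∫ y in x..astar, H y) :=
        mul_nonneg hcpos.le (by linarith)
      linarith
    · rw [if_neg (not_le.mpr hxs)]
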